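/- The singular value function is submultiplicative: for all s ≥ 0 and all d×d real matrices A, B, φ^s(AB) ≤ φ^s(A)φ^s(B). -/

import Mathlib

open Filter Topology

noncomputable def opNorm {n : Type*} [Fintype n] [DecidableEq n] (A : Matrix n n ℝ) : ℝ :=
  ‖Matrix.toEuclideanCLM (𝕜 := ℝ) A‖

noncomputable def specRad {n : Type*} [Fintype n] [DecidableEq n] (B : Matrix n n ℝ) : ℝ :=
  sSup {r : ℝ | ∃ μ ∈ spectrum ℂ (B.map (fun x => (x : ℂ))), r = ‖μ‖}

noncomputable def singularValues {d : ℕ} (A : Matrix (Fin d) (Fin d) ℝ) : Fin d → ℝ :=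
  fun i => Real.sqrt ((Matrix.isHermitian_iff_isSymm.mpr (Matrix.isSymm_transpose_mul_self A)).eigenvalues
    (Tuple.sort (fun j => -((Matrix.isHermitian_iff_isSymm.mpr (Matrix.isSymm_transpose_mul_self A)).eigenvalues j)) i))

noncomputable def svf {d : ℕ} (A : Matrix (Fin d) (Fin d) ℝ) (s : ℝ) : ℝ :=
  if s < d then
    ∏ i : Fin d,
      if (i : ℤ) < ⌊s⌋ then singularValues A i
      else if (i : ℤ) = ⌊s⌋ then singularValues A i ^ (s - (⌊s⌋ : ℝ)) else 1
  else |A.det| ^ (s / d)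

def IsGenPerm {n : Type*} [Fintype n] (A : Matrix n n ℝ) : Prop :=
  (∀ i, ∃! j, A i j ≠ 0) ∧ (∀ j, ∃! i, A i j ≠ 0)

abbrev SIdx (d k : ℕ) := {p : Finset (Fin d) × Fin d // p.1.card = k ∧ p.2 ∉ p.1}

noncomputable def Pmat {d : ℕ} (s : ℝ) (k : ℕ) (π : Equiv.Perm (Fin d)) (a : Fin d → ℝ) :
    Matrix (SIdx d k) (SIdx d k) ℝ :=
  fun q p =>
    if q.1.1 = p.1.1.image π ∧ q.1.2 = π p.1.2 then
      (∏ j ∈ p.1.1, |a j|) * |a p.1.2| ^ (s - (k : ℝ))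
    else 0

noncomputable def pressure {d N : ℕ} (A : Fin N → Matrix (Fin d) (Fin d) ℝ) (s : ℝ) : ℝ :=
  ⨅ n : ℕ, (1 / ((n : ℝ) + 1)) *
    Real.log (∑ f : Fin (n + 1) → Fin N, svf ((List.ofFn fun m => A (f m)).prod) s)

namespace SVFaux

open Matrix Finset

variable {d k : ℕ}

abbrev Kset (d k : ℕ) := {S : Finset (Fin d) // S.card = k}

noncomputable def kemb (S : Kset d k) : Fin k → Fin d := S.1.orderEmbOfFin S.2

lemma kemb_strictMono (S : Kset d k) : StrictMono (kemb S) :=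
  (S.1.orderEmbOfFin S.2).strictMono

lemma kemb_injective (S : Kset d k) : Function.Injective (kemb S) :=
  (kemb_strictMono S).injective

lemma kemb_mem (S : Kset d k) (j : Fin k) : kemb S j ∈ S.1 :=
  Finset.orderEmbOfFin_mem _ _ _

lemma image_kemb (S : Kset d k) : Finset.image (kemb S) Finset.univ = S.1 := by
  apply Finset.coe_injective
  rw [Finset.coe_image, Finset.coe_univ, Set.image_univ]
  exact Finset.range_orderEmbOfFin _ _

lemma prod_kemb (S : Kset d k) (f : Fin d → ℝ) :
    ∏ j : Fin k, f (kemb S j) = ∏ i ∈ S.1, f i := by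
  rw [← image_kemb S, Finset.prod_image (fun a _ b _ h => kemb_injective S h)]

lemma kset_nonempty (h : k ≤ d) : Nonempty (Kset d k) := by
  obtain ⟨t, -, ht⟩ := Finset.exists_subset_card_eq
    (s := (Finset.univ : Finset (Fin d))) (n := k) (by simpa using h)
  exact ⟨⟨t, ht⟩⟩

lemma image_perm_univ {k : ℕ} (π : Equiv.Perm (Fin k)) :
    Finset.image (⇑π) Finset.univ = Finset.univ := by
  ext x
  simp only [Finset.mem_image, Finset.mem_univ, iff_true]
  exact ⟨π.symm x, by simp⟩

/-- The equivalence between pairs (subset, permutation) and injective maps `Fin k → Fin d`. -/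
noncomputable def injEquiv (d k : ℕ) :
    (Kset d k × Equiv.Perm (Fin k)) ≃ {φ : Fin k → Fin d // Function.Injective φ} := by
  apply Equiv.ofBijective
    (fun p => ⟨kemb p.1 ∘ p.2, (kemb_injective p.1).comp p.2.injective⟩)
  constructor
  · rintro ⟨S, π⟩ ⟨S', π'⟩ h
    have h' : kemb S ∘ π = kemb S' ∘ π' := congrArg Subtype.val h
    have hS : S = S' := by
      apply Subtype.ext
      rw [← image_kemb S, ← image_kemb S']
      have e1 : Finset.image (kemb S ∘ ⇑π) Finset.univ = Finset.image (kemb S) Finset.univ := by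
        rw [← Finset.image_image, image_perm_univ]
      have e2 : Finset.image (kemb S' ∘ ⇑π') Finset.univ = Finset.image (kemb S') Finset.univ := by
        rw [← Finset.image_image, image_perm_univ]
      rw [← e1, ← e2, h']
    subst hS
    have hπ : π = π' := Equiv.ext fun i => kemb_injective S (congrFun h' i)
    rw [hπ]
  · rintro ⟨φ, hφ⟩
    set S : Kset d k := ⟨Finset.image φ Finset.univ, by
      rw [Finset.card_image_of_injective _ hφ, Finset.card_univ, Fintype.card_fin]⟩ with hSdef
    have hmem : ∀ i, φ i ∈ S.1 := fun i => Finset.mem_image_of_mem _ (Finset.mem_univ i)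
    set g : Fin k → Fin k := fun i => (S.1.orderIsoOfFin S.2).symm ⟨φ i, hmem i⟩ with hg
    have hiso : ∀ i, ((S.1.orderIsoOfFin S.2) (g i) : Fin d) = φ i := by
      intro i
      simp only [hg, OrderIso.apply_symm_apply]
    have hginj : Function.Injective g := by
      intro a b hab
      have h2 := congrArg (fun z => ((S.1.orderIsoOfFin S.2) z : Fin d)) hab
      simp only [hiso] at h2
      exact hφ h2
    have hgbij : Function.Bijective g := (Finite.injective_iff_bijective).mp hginj
    refine ⟨⟨S, Equiv.ofBijective g hgbij⟩, ?_⟩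
    apply Subtype.ext
    funext i
    show kemb S (g i) = φ i
    rw [show kemb S (g i) = (S.1.orderEmbOfFin S.2) (g i) from rfl,
      ← Finset.coe_orderIsoOfFin_apply]
    exact hiso i

theorem cauchyBinet {d k : ℕ} (M : Matrix (Fin k) (Fin d) ℝ) (N : Matrix (Fin d) (Fin k) ℝ) :
    (M * N).det =
      ∑ S : Kset d k, (M.submatrix id (kemb S)).det * (N.submatrix (kemb S) id).det := by
  classical
  have step1 : (M * N).det =
      ∑ φ : Fin k → Fin d, (M.submatrix id φ).det * ∏ i, N (φ i) i := by
    rw [Matrix.det_apply]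
    simp only [Matrix.mul_apply]
    calc ∑ σ : Equiv.Perm (Fin k), Equiv.Perm.sign σ • ∏ i, ∑ j, M (σ i) j * N j i
        = ∑ σ : Equiv.Perm (Fin k), ∑ φ ∈ Fintype.piFinset (fun _ : Fin k => (Finset.univ : Finset (Fin d))),
            Equiv.Perm.sign σ • ∏ i, (M (σ i) (φ i) * N (φ i) i) := by
          simp_rw [Finset.prod_univ_sum, Finset.smul_sum]
      _ = ∑ φ : Fin k → Fin d, ∑ σ : Equiv.Perm (Fin k),
            Equiv.Perm.sign σ • ∏ i, (M (σ i) (φ i) * N (φ i) i) := by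
          rw [Fintype.piFinset_univ]
          exact Finset.sum_comm
      _ = ∑ φ : Fin k → Fin d, (M.submatrix id φ).det * ∏ i, N (φ i) i := by
          refine Finset.sum_congr rfl fun φ _ => ?_
          rw [Matrix.det_apply, Finset.sum_mul]
          refine Finset.sum_congr rfl fun σ _ => ?_
          rw [Finset.prod_mul_distrib, smul_mul_assoc]
          rfl
  rw [step1]
  have hzero : ∀ φ : Fin k → Fin d, ¬ Function.Injective φ →
      (M.submatrix id φ).det * ∏ i, N (φ i) i = 0 := by
    intro φ hφ
    rw [Function.not_injective_iff] at hφ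
    obtain ⟨a, b, hab, hne⟩ := hφ
    have : (M.submatrix id φ).det = 0 :=
      Matrix.det_zero_of_column_eq hne (fun l => by simp [Matrix.submatrix_apply, hab])
    rw [this, zero_mul]
  have step2 : ∑ φ : Fin k → Fin d, (M.submatrix id φ).det * ∏ i, N (φ i) i =
      ∑ φ : {φ : Fin k → Fin d // Function.Injective φ},
        (M.submatrix id φ.1).det * ∏ i, N (φ.1 i) i := by
    rw [← Finset.sum_filter_of_ne (p := fun φ => Function.Injective φ)
      (fun φ _ h => by by_contra hc; exact h (hzero φ hc))]
    exact (Finset.sum_subtype (p := fun φ : Fin k → Fin d => Function.Injective φ)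
      (Finset.univ.filter fun φ : Fin k → Fin d => Function.Injective φ)
      (fun φ => by simp) (fun φ => (M.submatrix id φ).det * ∏ i, N (φ i) i))
  rw [step2, ← Equiv.sum_comp (injEquiv d k), Fintype.sum_prod_type]
  refine Finset.sum_congr rfl fun S _ => ?_
  have key : ∀ π : Equiv.Perm (Fin k),
      ((M.submatrix id ((injEquiv d k (S, π)).1)).det * ∏ i, N ((injEquiv d k (S, π)).1 i) i)
      = ((Equiv.Perm.sign π : ℤ) : ℝ) * (M.submatrix id (kemb S)).det *
          ∏ i, (N.submatrix (kemb S) id) (π i) i := by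
    intro π
    have hco : (injEquiv d k (S, π)).1 = kemb S ∘ π := rfl
    rw [hco]
    have : M.submatrix id (kemb S ∘ ⇑π) = (M.submatrix id (kemb S)).submatrix id ⇑π := by
      rw [Matrix.submatrix_submatrix]
      rfl
    rw [this, Matrix.det_permute']
    rfl
  simp_rw [key]
  rw [Matrix.det_apply (N.submatrix (kemb S) id), Finset.mul_sum]
  refine Finset.sum_congr rfl fun π _ => ?_
  rw [Units.smul_def, zsmul_eq_mul]
  ring

noncomputable def cmp (k : ℕ) {d : ℕ} (A : Matrix (Fin d) (Fin d) ℝ) :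
    Matrix (Kset d k) (Kset d k) ℝ :=
  fun S T => (A.submatrix (kemb S) (kemb T)).det

lemma cmp_mul (A B : Matrix (Fin d) (Fin d) ℝ) :
    cmp k (A * B) = cmp k A * cmp k B := by
  funext S T
  have h1 : (A * B).submatrix (kemb S) (kemb T) =
      (A.submatrix (kemb S) id) * (B.submatrix id (kemb T)) := by
    ext i j
    simp [Matrix.mul_apply, Matrix.submatrix_apply]
  show ((A * B).submatrix (kemb S) (kemb T)).det = _
  rw [h1, cauchyBinet]
  simp only [Matrix.mul_apply, Matrix.submatrix_submatrix]
  rfl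

lemma cmp_one : cmp k (1 : Matrix (Fin d) (Fin d) ℝ) = 1 := by
  funext S T
  show ((1 : Matrix (Fin d) (Fin d) ℝ).submatrix (kemb S) (kemb T)).det = (1 : Matrix (Kset d k) (Kset d k) ℝ) S T
  by_cases hST : S = T
  · subst hST
    rw [Matrix.submatrix_one _ (kemb_injective S), Matrix.det_one, Matrix.one_apply_eq]
  · have hsub : ¬ S.1 ⊆ T.1 := by
      intro hsub
      exact hST (Subtype.ext (Finset.eq_of_subset_of_card_le hsub (by rw [S.2, T.2])))
    obtain ⟨i, hiS, hiT⟩ := Finset.not_subset.mp hsub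
    obtain ⟨j0, hj0⟩ : ∃ j0, kemb S j0 = i := by
      have : i ∈ Finset.image (kemb S) Finset.univ := by rw [image_kemb]; exact hiS
      obtain ⟨j0, _, h⟩ := Finset.mem_image.mp this
      exact ⟨j0, h⟩
    have hzero : ((1 : Matrix (Fin d) (Fin d) ℝ).submatrix (kemb S) (kemb T)).det = 0 := by
      apply Matrix.det_eq_zero_of_row_eq_zero j0
      intro j
      have : kemb S j0 ≠ kemb T j := by
        rw [hj0]; intro h; exact hiT (h ▸ kemb_mem T j)
      simp [Matrix.submatrix_apply, Matrix.one_apply_ne this]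
    rw [hzero, Matrix.one_apply_ne hST]

lemma cmp_transpose (A : Matrix (Fin d) (Fin d) ℝ) :
    cmp k Aᵀ = (cmp k A)ᵀ := by
  funext S T
  show (Aᵀ.submatrix (kemb S) (kemb T)).det = (A.submatrix (kemb T) (kemb S)).det
  rw [← Matrix.transpose_submatrix, Matrix.det_transpose]

lemma cmp_diagonal (w : Fin d → ℝ) :
    cmp k (Matrix.diagonal w) = Matrix.diagonal (fun S : Kset d k => ∏ i ∈ S.1, w i) := by
  funext S T
  show ((Matrix.diagonal w).submatrix (kemb S) (kemb T)).det = _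
  by_cases hST : S = T
  · subst hST
    rw [Matrix.submatrix_diagonal _ _ (kemb_injective S), Matrix.det_diagonal,
      Matrix.diagonal_apply_eq]
    exact prod_kemb S w
  · have hsub : ¬ S.1 ⊆ T.1 := by
      intro hsub
      exact hST (Subtype.ext (Finset.eq_of_subset_of_card_le hsub (by rw [S.2, T.2])))
    obtain ⟨i, hiS, hiT⟩ := Finset.not_subset.mp hsub
    obtain ⟨j0, hj0⟩ : ∃ j0, kemb S j0 = i := by
      have : i ∈ Finset.image (kemb S) Finset.univ := by rw [image_kemb]; exact hiS
      obtain ⟨j0, _, h⟩ := Finset.mem_image.mp this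
      exact ⟨j0, h⟩
    have hzero : ((Matrix.diagonal w).submatrix (kemb S) (kemb T)).det = 0 := by
      apply Matrix.det_eq_zero_of_row_eq_zero j0
      intro j
      have hne : kemb S j0 ≠ kemb T j := by
        rw [hj0]; intro h; exact hiT (h ▸ kemb_mem T j)
      simp [Matrix.submatrix_apply, Matrix.diagonal_apply_ne _ hne]
    rw [hzero, Matrix.diagonal_apply_ne _ hST]

noncomputable def onorm {n : Type*} [Fintype n] [DecidableEq n] (A : Matrix n n ℝ) : ℝ :=
  ‖Matrix.toEuclideanCLM (𝕜 := ℝ) A‖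

variable {n : Type*} [Fintype n] [DecidableEq n]

lemma onorm_nonneg (A : Matrix n n ℝ) : 0 ≤ onorm A := norm_nonneg _

lemma onorm_mul_le (A B : Matrix n n ℝ) : onorm (A * B) ≤ onorm A * onorm B := by
  unfold onorm
  rw [_root_.map_mul]
  exact norm_mul_le _ _

lemma onorm_star_mul_self (A : Matrix n n ℝ) : onorm (Aᵀ * A) = onorm A * onorm A := by
  unfold onorm
  have hstar : (Aᵀ : Matrix n n ℝ) = star A := by
    rw [Matrix.star_eq_conjTranspose, Matrix.conjTranspose_eq_transpose_of_trivial]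
  rw [_root_.map_mul, hstar, map_star]
  exact CStarRing.norm_star_mul_self (x := Matrix.toEuclideanCLM (𝕜 := ℝ) A)

lemma onorm_one [Nonempty n] : onorm (1 : Matrix n n ℝ) = 1 := by
  unfold onorm
  rw [_root_.map_one]
  exact norm_one

lemma onorm_unit [Nonempty n] {W : Matrix n n ℝ} (h : Wᵀ * W = 1) : onorm W = 1 := by
  have h2 : onorm W * onorm W = 1 := by rw [← onorm_star_mul_self, h, onorm_one]
  nlinarith [onorm_nonneg W]

lemma onorm_conj [Nonempty n] {W : Matrix n n ℝ} (M : Matrix n n ℝ)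
    (h1 : Wᵀ * W = 1) (h2 : W * Wᵀ = 1) :
    onorm (W * M * Wᵀ) = onorm M := by
  have hW := onorm_unit h1
  have hW' : onorm Wᵀ = 1 := onorm_unit (W := Wᵀ) (by rwa [Matrix.transpose_transpose])
  have bound : ∀ (X Y : Matrix n n ℝ), onorm X = 1 → onorm Y = 1 →
      ∀ Z, onorm (X * Z * Y) ≤ onorm Z := by
    intro X Y hX hY Z
    calc onorm (X * Z * Y) ≤ onorm (X * Z) * onorm Y := onorm_mul_le _ _
      _ = onorm (X * Z) := by rw [hY, mul_one]
      _ ≤ onorm X * onorm Z := onorm_mul_le _ _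
      _ = onorm Z := by rw [hX, one_mul]
  apply le_antisymm (bound _ _ hW hW' M)
  have hM : M = Wᵀ * (W * M * Wᵀ) * W := by
    calc M = (Wᵀ * W) * M * (Wᵀ * W) := by rw [h1, Matrix.one_mul, Matrix.mul_one]
    _ = Wᵀ * (W * M * Wᵀ) * W := by noncomm_ring
  calc onorm M = onorm (Wᵀ * (W * M * Wᵀ) * W) := by rw [← hM]
    _ ≤ onorm (W * M * Wᵀ) := bound _ _ hW' hW _

lemma onorm_diagonal_le (w : n → ℝ) {C : ℝ} (hC : 0 ≤ C) (h : ∀ i, |w i| ≤ C) :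
    onorm (Matrix.diagonal w) ≤ C := by
  unfold onorm
  apply ContinuousLinearMap.opNorm_le_bound _ hC
  intro x
  set v : n → ℝ := (WithLp.equiv 2 (n → ℝ)) x with hv
  have hx : x = (WithLp.equiv 2 (n → ℝ)).symm v := by simp [hv]
  rw [hx, show ∀ (M : Matrix n n ℝ) (y : n → ℝ), Matrix.toEuclideanCLM (𝕜 := ℝ) M ((WithLp.equiv 2 (n → ℝ)).symm y) = (WithLp.equiv 2 (n → ℝ)).symm (Matrix.toLin' M y) from fun _ _ => rfl]
  rw [EuclideanSpace.norm_eq, EuclideanSpace.norm_eq]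
  have happ : ∀ i, ((WithLp.equiv 2 (n → ℝ)).symm ((Matrix.toLin' (Matrix.diagonal w)) v)) i
      = w i * v i := by
    intro i
    simp [Matrix.toLin'_apply, Matrix.mulVec_diagonal]
  have hcoord : ∀ i, ((WithLp.equiv 2 (n → ℝ)).symm v) i = v i := fun i => rfl
  calc √(∑ i, ‖((WithLp.equiv 2 (n → ℝ)).symm ((Matrix.toLin' (Matrix.diagonal w)) v)) i‖ ^ 2)
      = √(∑ i, (w i * v i) ^ 2) := by
        congr 1
        refine Finset.sum_congr rfl fun i _ => ?_
        rw [happ i, Real.norm_eq_abs, sq_abs]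
    _ ≤ √(∑ i, C ^ 2 * v i ^ 2) := by
        apply Real.sqrt_le_sqrt
        apply Finset.sum_le_sum
        intro i _
        rw [mul_pow]
        apply mul_le_mul_of_nonneg_right _ (sq_nonneg _)
        calc w i ^ 2 = |w i| ^ 2 := (sq_abs _).symm
          _ ≤ C ^ 2 := by have := h i; nlinarith [abs_nonneg (w i)]
    _ = C * √(∑ i, ‖((WithLp.equiv 2 (n → ℝ)).symm v) i‖ ^ 2) := by
        rw [← Finset.mul_sum, Real.sqrt_mul (sq_nonneg _), Real.sqrt_sq hC]
        congr 2
        refine Finset.sum_congr rfl fun i _ => ?_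
        rw [hcoord i, Real.norm_eq_abs, sq_abs]

lemma abs_le_onorm_diagonal (w : n → ℝ) (i : n) : |w i| ≤ onorm (Matrix.diagonal w) := by
  have hle := (Matrix.toEuclideanCLM (𝕜 := ℝ) (Matrix.diagonal w)).le_opNorm
    (EuclideanSpace.single i 1)
  have h1 : ‖EuclideanSpace.single i (1:ℝ)‖ = 1 := by rw [EuclideanSpace.norm_single]; simp
  have h2 : (Matrix.toEuclideanCLM (𝕜 := ℝ) (Matrix.diagonal w)) (EuclideanSpace.single i 1)
      = EuclideanSpace.single i (w i) := by
    have hs : (EuclideanSpace.single i (1:ℝ)) = (WithLp.equiv 2 (n → ℝ)).symm (Pi.single i 1) := rfl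
    rw [hs, show ∀ (M : Matrix n n ℝ) (y : n → ℝ), Matrix.toEuclideanCLM (𝕜 := ℝ) M ((WithLp.equiv 2 (n → ℝ)).symm y) = (WithLp.equiv 2 (n → ℝ)).symm (Matrix.toLin' M y) from fun _ _ => rfl]
    have : (Matrix.toLin' (Matrix.diagonal w)) (Pi.single i 1) = Pi.single i (w i) := by
      rw [Matrix.toLin'_apply, Matrix.mulVec_single]
      funext j
      by_cases hij : j = i
      · subst hij; simp [Matrix.diagonal_apply_eq, Pi.single_eq_same]
      · simp [Matrix.diagonal_apply_ne _ hij, Pi.single_eq_of_ne hij]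
    rw [this]
    rfl
  rw [h2] at hle
  rw [EuclideanSpace.norm_single, Real.norm_eq_abs] at hle
  rw [h1, mul_one] at hle
  exact hle

lemma le_apply_of_strictMono {k d : ℕ} {f : Fin k → Fin d} (hf : StrictMono f) :
    ∀ j : Fin k, (j : ℕ) ≤ (f j : ℕ) := by
  intro j
  obtain ⟨m, hm⟩ := j
  induction m with
  | zero => exact Nat.zero_le _
  | succ t ih =>
    have ht : t < k := Nat.lt_of_succ_lt hm
    have h1 := ih ht
    have h2 : f ⟨t, ht⟩ < f ⟨t + 1, hm⟩ := hf (by simp [Fin.lt_def])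
    rw [Fin.lt_def] at h2
    simp only [Fin.val_mk] at h1 h2 ⊢
    omega

lemma prod_subset_le {d k : ℕ} (hk : k ≤ d) (ν : Fin d → ℝ) (h0 : ∀ i, 0 ≤ ν i)
    (hmono : Antitone ν) (T : Finset (Fin d)) (hT : T.card = k) :
    ∏ i ∈ T, ν i ≤ ∏ j : Fin k, ν (Fin.castLE hk j) := by
  rw [← prod_kemb ⟨T, hT⟩ ν]
  apply Finset.prod_le_prod (fun j _ => h0 _)
  intro j _
  apply hmono
  rw [Fin.le_def]
  exact le_apply_of_strictMono (kemb_strictMono ⟨T, hT⟩) j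

lemma unitary_facts {d : ℕ} {S : Matrix (Fin d) (Fin d) ℝ} (hS : S.IsHermitian) :
    (hS.eigenvectorUnitary : Matrix (Fin d) (Fin d) ℝ) *
      (hS.eigenvectorUnitary : Matrix (Fin d) (Fin d) ℝ)ᵀ = 1 ∧
    (hS.eigenvectorUnitary : Matrix (Fin d) (Fin d) ℝ)ᵀ *
      (hS.eigenvectorUnitary : Matrix (Fin d) (Fin d) ℝ) = 1 := by
  set U : Matrix (Fin d) (Fin d) ℝ := (hS.eigenvectorUnitary : Matrix (Fin d) (Fin d) ℝ) with hU
  have hmem : U ∈ Matrix.unitaryGroup (Fin d) ℝ := hS.eigenvectorUnitary.2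
  have hstar : star U = Uᵀ := by
    rw [Matrix.star_eq_conjTranspose, Matrix.conjTranspose_eq_transpose_of_trivial]
  have h1 : U * Uᵀ = 1 := by rw [← hstar]; exact Matrix.mem_unitaryGroup_iff.mp hmem
  exact ⟨h1, mul_eq_one_comm.mp h1⟩

lemma spectral_real {d : ℕ} {S : Matrix (Fin d) (Fin d) ℝ} (hS : S.IsHermitian) :
    S = (hS.eigenvectorUnitary : Matrix (Fin d) (Fin d) ℝ) *
      Matrix.diagonal hS.eigenvalues * (hS.eigenvectorUnitary : Matrix (Fin d) (Fin d) ℝ)ᵀ := by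
  have h := hS.spectral_theorem
  rw [RCLike.ofReal_real_eq_id, Function.id_comp] at h
  rw [← Matrix.conjTranspose_eq_transpose_of_trivial, ← Matrix.star_eq_conjTranspose]
  exact h

lemma onorm_cmp_hermitian {d k : ℕ} (hk : k ≤ d) {S : Matrix (Fin d) (Fin d) ℝ}
    (hS : S.IsHermitian) :
    onorm (cmp k S) =
      onorm (Matrix.diagonal (fun T : Kset d k => ∏ i ∈ T.1, hS.eigenvalues i)) := by
  haveI := kset_nonempty hk
  set U : Matrix (Fin d) (Fin d) ℝ := (hS.eigenvectorUnitary : Matrix (Fin d) (Fin d) ℝ) with hU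
  obtain ⟨hU2, hU1⟩ := unitary_facts hS
  set W : Matrix (Kset d k) (Kset d k) ℝ := cmp k U with hW
  have hWt : cmp k Uᵀ = Wᵀ := cmp_transpose U
  have hW1 : Wᵀ * W = 1 := by
    rw [hW, ← cmp_transpose, ← cmp_mul, hU1, cmp_one]
  have hW2 : W * Wᵀ = 1 := by
    rw [hW, ← cmp_transpose, ← cmp_mul, hU2, cmp_one]
  calc onorm (cmp k S)
      = onorm (W * cmp k (Matrix.diagonal hS.eigenvalues) * Wᵀ) := by
        rw [hW, ← hWt, ← cmp_mul, ← cmp_mul, ← spectral_real hS]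
    _ = onorm (cmp k (Matrix.diagonal hS.eigenvalues)) := onorm_conj _ hW1 hW2
    _ = _ := by rw [cmp_diagonal]


noncomputable def Phi {d : ℕ} (k : ℕ) (hk : k ≤ d) (X : Matrix (Fin d) (Fin d) ℝ) : ℝ :=
  ∏ j : Fin k, singularValues X (Fin.castLE hk j)

lemma singularValues_eq {d : ℕ} (X : Matrix (Fin d) (Fin d) ℝ) (i : Fin d) :
    singularValues X i = Real.sqrt ((Matrix.isHermitian_iff_isSymm.mpr (Matrix.isSymm_transpose_mul_self X)).eigenvalues
      (Tuple.sort (fun j => -((Matrix.isHermitian_iff_isSymm.mpr (Matrix.isSymm_transpose_mul_self X)).eigenvalues j)) i)) := rfl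

lemma singularValues_nonneg {d : ℕ} (X : Matrix (Fin d) (Fin d) ℝ) (i : Fin d) :
    0 ≤ singularValues X i := Real.sqrt_nonneg _

lemma phi_nonneg {d k : ℕ} (hk : k ≤ d) (X : Matrix (Fin d) (Fin d) ℝ) :
    0 ≤ Phi k hk X :=
  Finset.prod_nonneg fun j _ => singularValues_nonneg X _

lemma nu_nonneg {d : ℕ} (X : Matrix (Fin d) (Fin d) ℝ) (i : Fin d) :
    0 ≤ (Matrix.isHermitian_iff_isSymm.mpr (Matrix.isSymm_transpose_mul_self X)).eigenvalues i :=
  (Matrix.posSemidef_conjTranspose_mul_self X).eigenvalues_nonneg i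

lemma nu_antitone {d : ℕ} (X : Matrix (Fin d) (Fin d) ℝ) :
    Antitone (fun i => (Matrix.isHermitian_iff_isSymm.mpr (Matrix.isSymm_transpose_mul_self X)).eigenvalues
      (Tuple.sort (fun j => -((Matrix.isHermitian_iff_isSymm.mpr (Matrix.isSymm_transpose_mul_self X)).eigenvalues j)) i)) := by
  intro i j hij
  have := Tuple.monotone_sort
    (fun j => -((Matrix.isHermitian_iff_isSymm.mpr (Matrix.isSymm_transpose_mul_self X)).eigenvalues j)) hij
  simp only [Function.comp_apply] at this
  linarith

lemma phi_eq_onorm {d k : ℕ} (hk : k ≤ d) (X : Matrix (Fin d) (Fin d) ℝ) :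
    Phi k hk X = onorm (cmp k X) := by
  classical
  set hS := Matrix.isHermitian_iff_isSymm.mpr (Matrix.isSymm_transpose_mul_self X) with hhS
  set μ : Fin d → ℝ := hS.eigenvalues with hμ
  set σ : Equiv.Perm (Fin d) := Tuple.sort (fun j => -μ j) with hσ
  set ν : Fin d → ℝ := fun i => μ (σ i) with hν
  set P : ℝ := ∏ j : Fin k, ν (Fin.castLE hk j) with hP
  have hν0 : ∀ i, 0 ≤ ν i := fun i => nu_nonneg X (σ i)
  have hνanti : Antitone ν := nu_antitone X
  have hP0 : 0 ≤ P := Finset.prod_nonneg fun j _ => hν0 _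
  -- step B : onorm of the compound of Xᴴ X equals P
  have hBle : ∀ T : Kset d k, ∏ i ∈ T.1, μ i ≤ P := by
    intro T
    have himg : ∏ i ∈ T.1.image σ.symm, ν i = ∏ i ∈ T.1, μ i := by
      rw [Finset.prod_image (fun a _ b _ h => σ.symm.injective h)]
      refine Finset.prod_congr rfl fun i _ => ?_
      simp [hν]
    rw [← himg]
    exact prod_subset_le hk ν hν0 hνanti _
      (by rw [Finset.card_image_of_injective _ σ.symm.injective, T.2])
  set T0 : Kset d k := ⟨Finset.image (fun j : Fin k => σ (Fin.castLE hk j)) Finset.univ, by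
    rw [Finset.card_image_of_injective _
      (fun a b h => Fin.castLE_injective hk (σ.injective h)), Finset.card_univ, Fintype.card_fin]⟩
    with hT0
  have hT0P : ∏ i ∈ T0.1, μ i = P := by
    rw [hT0]
    rw [Finset.prod_image (fun a _ b _ h =>
      (Fin.castLE_injective hk) (σ.injective h))]
  have hB : onorm (cmp k (Xᴴ * X)) = P := by
    rw [Matrix.conjTranspose_eq_transpose_of_trivial, onorm_cmp_hermitian hk hS]
    apply le_antisymm
    · apply onorm_diagonal_le _ hP0
      intro T
      rw [abs_of_nonneg (Finset.prod_nonneg fun i _ => nu_nonneg X i)]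
      exact hBle T
    · have h1 : P = |∏ i ∈ T0.1, μ i| := by rw [hT0P, abs_of_nonneg hP0]
      rw [h1]
      exact abs_le_onorm_diagonal (fun T : Kset d k => ∏ i ∈ T.1, hS.eigenvalues i) T0
  -- step C : that same norm is the square of the norm of the compound of X
  have hC : onorm (cmp k (Xᴴ * X)) = onorm (cmp k X) * onorm (cmp k X) := by
    rw [Matrix.conjTranspose_eq_transpose_of_trivial, cmp_mul, cmp_transpose]
    exact onorm_star_mul_self (cmp k X)
  -- step A : Phi squared is P
  have hA : Phi k hk X * Phi k hk X = P := by
    rw [Phi, ← Finset.prod_mul_distrib, hP]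
    refine Finset.prod_congr rfl fun j _ => ?_
    rw [singularValues_eq]
    exact Real.mul_self_sqrt (hν0 _)
  have hsq : Phi k hk X * Phi k hk X = onorm (cmp k X) * onorm (cmp k X) := by
    rw [hA, ← hB, hC]
  calc Phi k hk X = Real.sqrt (Phi k hk X * Phi k hk X) :=
        (Real.sqrt_mul_self (phi_nonneg hk X)).symm
    _ = Real.sqrt (onorm (cmp k X) * onorm (cmp k X)) := by rw [hsq]
    _ = onorm (cmp k X) := Real.sqrt_mul_self (onorm_nonneg _)

lemma phi_submul {d k : ℕ} (hk : k ≤ d) (A B : Matrix (Fin d) (Fin d) ℝ) :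
    Phi k hk (A * B) ≤ Phi k hk A * Phi k hk B := by
  rw [phi_eq_onorm hk, phi_eq_onorm hk, phi_eq_onorm hk, cmp_mul]
  exact onorm_mul_le _ _

lemma interp_aux {x y θ : ℝ} (hx : 0 ≤ x) (hy : 0 ≤ y) (h0 : 0 ≤ θ) (h1 : θ < 1) :
    x * y ^ θ = x ^ (1 - θ) * (x * y) ^ θ := by
  rcases eq_or_lt_of_le hx with hx0 | hx0
  · rcases eq_or_lt_of_le h0 with h00 | h00
    · rw [← h00, ← hx0]
      simp
    · rw [← hx0]
      simp [Real.zero_rpow (show (1:ℝ) - θ ≠ 0 by linarith), Real.zero_rpow (ne_of_gt h00)]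
  · rw [Real.mul_rpow (le_of_lt hx0) hy, ← mul_assoc]
    have hxx : x ^ (1 - θ) * x ^ θ = x := by
      rw [← Real.rpow_add hx0]
      norm_num
    rw [hxx]

end SVFaux

theorem stmt12 {d : ℕ} (s : ℝ) (hs : 0 ≤ s) (A B : Matrix (Fin d) (Fin d) ℝ) :
    svf (A * B) s ≤ svf A s * svf B s := by
  classical
  unfold svf
  by_cases hsd : s < (d : ℝ)
  · rw [if_pos hsd, if_pos hsd, if_pos hsd]
    set k : ℕ := ⌊s⌋.toNat with hk
    have hfl : ⌊s⌋ = (k : ℤ) := (Int.toNat_of_nonneg (Int.floor_nonneg.2 hs)).symm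
    have hks : (k : ℝ) ≤ s := by
      have h := Int.floor_le s
      rwa [hfl, Int.cast_natCast] at h
    have hkd : k < d := by
      have h : (k : ℝ) < (d : ℝ) := lt_of_le_of_lt hks hsd
      exact_mod_cast h
    have hk1 : k ≤ d := le_of_lt hkd
    have hk2 : k + 1 ≤ d := hkd
    set θ : ℝ := s - (k : ℝ) with hθ
    have hθ0 : 0 ≤ θ := by rw [hθ]; linarith
    have hθ1 : θ < 1 := by
      have h := Int.lt_floor_add_one s
      rw [hfl] at h
      push_cast at h
      rw [hθ]; linarith
    have hexp : s - ((⌊s⌋ : ℤ) : ℝ) = θ := by rw [hfl, hθ]; push_cast; ring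
    have key : ∀ X : Matrix (Fin d) (Fin d) ℝ,
        (∏ i : Fin d, if (i : ℤ) < ⌊s⌋ then singularValues X i
          else if (i : ℤ) = ⌊s⌋ then singularValues X i ^ (s - ((⌊s⌋ : ℤ) : ℝ)) else 1)
        = SVFaux.Phi k hk1 X * singularValues X ⟨k, hkd⟩ ^ θ := by
      intro X
      have hsplit : ∀ i : Fin d,
          (if (i : ℤ) < ⌊s⌋ then singularValues X i
            else if (i : ℤ) = ⌊s⌋ then singularValues X i ^ (s - ((⌊s⌋ : ℤ) : ℝ)) else 1)
          = (if (i : ℕ) < k then singularValues X i else 1) *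
            (if i = ⟨k, hkd⟩ then singularValues X i ^ θ else 1) := by
        intro i
        have hc1 : ((i : ℤ) < ⌊s⌋) ↔ ((i : ℕ) < k) := by
          rw [hfl]
          constructor <;> intro h <;> exact_mod_cast h
        have hc2 : ((i : ℤ) = ⌊s⌋) ↔ (i = ⟨k, hkd⟩) := by
          rw [hfl]
          constructor
          · intro h
            apply Fin.ext
            exact_mod_cast h
          · intro h
            subst h
            simp
        by_cases h1 : (i : ℕ) < k
        · have hne : i ≠ ⟨k, hkd⟩ := by
            intro h
            subst h
            simp at h1
          rw [if_pos (hc1.mpr h1), if_pos h1, if_neg hne, mul_one]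
        · by_cases h2 : i = ⟨k, hkd⟩
          · have hn1 : ¬ ((i : ℤ) < ⌊s⌋) := by rw [hc1]; exact h1
            rw [if_neg hn1, if_pos (hc2.mpr h2), if_neg h1, if_pos h2, one_mul, hexp]
          · have hn1 : ¬ ((i : ℤ) < ⌊s⌋) := by rw [hc1]; exact h1
            have hn2 : ¬ ((i : ℤ) = ⌊s⌋) := by rw [hc2]; exact h2
            rw [if_neg hn1, if_neg hn2, if_neg h1, if_neg h2, mul_one]
      rw [Finset.prod_congr rfl (fun i _ => hsplit i), Finset.prod_mul_distrib]
      congr 1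
      · rw [← Finset.prod_filter]
        have himg : Finset.univ.filter (fun i : Fin d => (i : ℕ) < k)
            = Finset.image (Fin.castLE hk1) Finset.univ := by
          ext i
          simp only [Finset.mem_filter, Finset.mem_univ, true_and, Finset.mem_image]
          constructor
          · intro h
            exact ⟨⟨(i : ℕ), h⟩, rfl⟩
          · rintro ⟨j, -, rfl⟩
            exact j.2
        rw [himg, Finset.prod_image (fun a _ b _ h => Fin.castLE_injective hk1 h)]
        rfl
      · rw [Finset.prod_ite_eq' Finset.univ (⟨k, hkd⟩ : Fin d)
          (fun i => singularValues X i ^ θ)]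
        simp
    have hPhisucc : ∀ X : Matrix (Fin d) (Fin d) ℝ,
        SVFaux.Phi (k + 1) hk2 X = SVFaux.Phi k hk1 X * singularValues X ⟨k, hkd⟩ := by
      intro X
      rw [SVFaux.Phi, Fin.prod_univ_castSucc]
      congr 1
    have hinterp : ∀ X : Matrix (Fin d) (Fin d) ℝ,
        SVFaux.Phi k hk1 X * singularValues X ⟨k, hkd⟩ ^ θ
        = SVFaux.Phi k hk1 X ^ (1 - θ) * SVFaux.Phi (k + 1) hk2 X ^ θ := by
      intro X
      rw [hPhisucc X]
      exact SVFaux.interp_aux (SVFaux.phi_nonneg hk1 X)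
        (SVFaux.singularValues_nonneg X _) hθ0 hθ1
    rw [key (A * B), key A, key B, hinterp (A * B), hinterp A, hinterp B]
    have h1θ : (0:ℝ) ≤ 1 - θ := by linarith
    calc SVFaux.Phi k hk1 (A * B) ^ (1 - θ) * SVFaux.Phi (k + 1) hk2 (A * B) ^ θ
        ≤ (SVFaux.Phi k hk1 A * SVFaux.Phi k hk1 B) ^ (1 - θ) *
          (SVFaux.Phi (k + 1) hk2 A * SVFaux.Phi (k + 1) hk2 B) ^ θ := by
          apply mul_le_mul
          · exact Real.rpow_le_rpow (SVFaux.phi_nonneg _ _) (SVFaux.phi_submul hk1 A B) h1θ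
          · exact Real.rpow_le_rpow (SVFaux.phi_nonneg _ _) (SVFaux.phi_submul hk2 A B) hθ0
          · exact Real.rpow_nonneg (SVFaux.phi_nonneg _ _) _
          · exact Real.rpow_nonneg (mul_nonneg (SVFaux.phi_nonneg _ _) (SVFaux.phi_nonneg _ _)) _
      _ = (SVFaux.Phi k hk1 A ^ (1 - θ) * SVFaux.Phi (k + 1) hk2 A ^ θ) *
          (SVFaux.Phi k hk1 B ^ (1 - θ) * SVFaux.Phi (k + 1) hk2 B ^ θ) := by
          rw [Real.mul_rpow (SVFaux.phi_nonneg _ _) (SVFaux.phi_nonneg _ _),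
            Real.mul_rpow (SVFaux.phi_nonneg _ _) (SVFaux.phi_nonneg _ _)]
          ring
  · rw [if_neg hsd, if_neg hsd, if_neg hsd]
    exact le_of_eq (by
      rw [Matrix.det_mul, abs_mul, Real.mul_rpow (abs_nonneg _) (abs_nonneg _)])
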